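/- For words u (nonempty), s, and contexts α, β, if w = u^k s (u^k)^r and k, t > 0, then α w β ≈^t_k α w^r β. -/

import Mathlib

/-- Number of occurrences of `v` or `v.reverse` in `w`. -/
def occR {A : Type*} [DecidableEq A] (w v : List A) : ℕ :=
  (List.range (w.length + 1)).countP
    (fun i => decide ((w.drop i).take v.length = v ∨ (w.drop i).take v.length = v.reverse))

/-- Equality up to threshold `t`. -/
def thrEq (t i j : ℕ) : Prop := i = j ∨ (t ≤ i ∧ t ≤ j)

/-- The `(k,t)`-locally-reversible threshold testable equivalence. -/
def LRTT {A : Type*} [DecidableEq A] (k t : ℕ) (w w' : List A) : Prop :=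
  (w.length < k ∧ (w' = w ∨ w' = w.reverse)) ∨
  (k ≤ w.length ∧ k ≤ w'.length ∧
    (∀ v : List A, v.length ≤ k → thrEq t (occR w v) (occR w' v)) ∧
    ({w.take (k - 1), (w.drop (w.length - (k - 1))).reverse} : Set (List A)) =
      {w'.take (k - 1), (w'.drop (w'.length - (k - 1))).reverse})

/-- `u^k`, the `k`-fold concatenation of `u`. -/
def wpow {A : Type*} (u : List A) (k : ℕ) : List A :=
  (List.replicate k u).flatten

namespace LrttAux

variable {A : Type*}

lemma window_eq_of_take_eq {l l' : List A} {n i m : ℕ}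
    (h : l.take n = l'.take n) (hm : i + m ≤ n) :
    (l.drop i).take m = (l'.drop i).take m := by
  have hmn : m ≤ n - i := by omega
  have h2 := congrArg (fun x : List A => (x.drop i).take m) h
  simpa [List.drop_take, List.take_take, Nat.min_eq_left hmn] using h2

lemma drop_eq_of_drop_eq {l l' : List A} {n i : ℕ}
    (h : l.drop n = l'.drop n) (hn : n ≤ i) :
    l.drop i = l'.drop i := by
  have h2 := congrArg (List.drop (i - n)) h
  have hni : n + (i - n) = i := by omega
  simpa [List.drop_drop, hni] using h2

lemma rev_window {c : List A} {j m : ℕ} (hj : j + m ≤ c.length) :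
    (c.reverse.drop (c.length - m - j)).take m = ((c.drop j).take m).reverse := by
  have h1 : (c.drop j).take m = (c.take (j + m)).drop j := by
    rw [List.take_drop]
  have hlen : (c.take (j + m)).length = j + m := by
    simp [List.length_take]; omega
  rw [h1, List.reverse_drop, hlen, List.reverse_take]
  have h2 : j + m - j = m := by omega
  rw [h2]
  have h3 : c.length - m - j = c.length - (j + m) := by omega
  rw [h3]

def Fm (pl cl vl r i : ℕ) : ℕ :=
  if pl + r < i + vl ∧ i + r < pl + cl then 2 * pl + cl - vl - i else i

lemma Fm_invol {pl cl vl r i : ℕ} (hvr : vl ≤ r) :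
    Fm pl cl vl r (Fm pl cl vl r i) = i := by
  unfold Fm
  split_ifs <;> omega

lemma occR_eq_card [DecidableEq A] (w v : List A) :
    occR w v = ((Finset.range (w.length + 1)).filter
      (fun i => (w.drop i).take v.length = v ∨ (w.drop i).take v.length = v.reverse)).card := by
  rw [occR, List.countP_eq_length_filter]
  rfl

lemma occ_step [DecidableEq A] (p c q v : List A) (r i : ℕ)
    (hvr : v.length ≤ r) (hr : r ≤ c.length)
    (ht : c.take r = c.reverse.take r)
    (hd : c.drop (c.length - r) = c.reverse.drop (c.length - r))
    (hpred : ((p ++ c ++ q).drop i).take v.length = v ∨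
             ((p ++ c ++ q).drop i).take v.length = v.reverse) :
    ((p ++ c.reverse ++ q).drop (Fm p.length c.length v.length r i)).take v.length = v ∨
    ((p ++ c.reverse ++ q).drop (Fm p.length c.length v.length r i)).take v.length = v.reverse := by
  unfold Fm
  by_cases hC : p.length + r < i + v.length ∧ i + r < p.length + c.length
  · rw [if_pos hC]
    set j := i - p.length with hj
    have hjv : j + v.length ≤ c.length := by omega
    have e1 : ((p ++ c ++ q).drop i).take v.length = (c.drop j).take v.length := by
      rw [List.append_assoc]
      have hi : i = p.length + j := by omega
      rw [hi, List.drop_length_add_append, List.drop_append_of_le_length (by omega),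
        List.take_append_of_le_length (by simp; omega)]
    have e2 : ((p ++ c.reverse ++ q).drop (2 * p.length + c.length - v.length - i)).take v.length
        = (c.reverse.drop (c.length - v.length - j)).take v.length := by
      rw [List.append_assoc]
      have hi2 : 2 * p.length + c.length - v.length - i
          = p.length + (c.length - v.length - j) := by omega
      rw [hi2, List.drop_length_add_append, List.drop_append_of_le_length (by simp; omega),
        List.take_append_of_le_length (by simp; omega)]
    rw [e2, rev_window hjv]
    rw [e1] at hpred
    rcases hpred with h | h
    · right; rw [h]
    · left; rw [h, List.reverse_reverse]
  · rw [if_neg hC]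
    rcases not_and_or.mp hC with h | h
    · have hle : i + v.length ≤ p.length + r := by omega
      have htk : (p ++ c ++ q).take (p.length + r)
          = (p ++ c.reverse ++ q).take (p.length + r) := by
        rw [List.append_assoc, List.append_assoc, List.take_length_add_append, List.take_length_add_append,
          List.take_append_of_le_length hr, List.take_append_of_le_length (by simpa using hr), ht]
      rw [← window_eq_of_take_eq htk hle]
      exact hpred
    · have hge : p.length + (c.length - r) ≤ i := by omega
      have hdr : (p ++ c ++ q).drop (p.length + (c.length - r))
          = (p ++ c.reverse ++ q).drop (p.length + (c.length - r)) := by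
        rw [List.append_assoc, List.append_assoc, List.drop_length_add_append, List.drop_length_add_append,
          List.drop_append_of_le_length (by omega),
          List.drop_append_of_le_length (by simp only [List.length_reverse]; omega), hd]
      rw [← drop_eq_of_drop_eq hdr hge]
      exact hpred

lemma occ_step_lt {A : Type*} (p c q v : List A) (r i : ℕ)
    (hvr : v.length ≤ r) (hr : r ≤ c.length)
    (hi : i < (p ++ c ++ q).length + 1) :
    Fm p.length c.length v.length r i < (p ++ c.reverse ++ q).length + 1 := by
  unfold Fm
  simp only [List.length_append, List.length_reverse] at *
  split <;> omega

lemma occR_middle_reverse [DecidableEq A] (p c q v : List A) (r : ℕ)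
    (hvr : v.length ≤ r) (hr : r ≤ c.length)
    (ht : c.take r = c.reverse.take r)
    (hd : c.drop (c.length - r) = c.reverse.drop (c.length - r)) :
    occR (p ++ c ++ q) v = occR (p ++ c.reverse ++ q) v := by
  rw [occR_eq_card, occR_eq_card]
  apply Finset.card_bij' (fun a _ => Fm p.length c.length v.length r a)
      (fun a _ => Fm p.length c.length v.length r a)
  · intro a ha
    simp only [Finset.mem_filter, Finset.mem_range] at *
    exact ⟨occ_step_lt p c q v r a hvr hr ha.1, occ_step p c q v r a hvr hr ht hd ha.2⟩
  · intro a ha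
    simp only [Finset.mem_filter, Finset.mem_range] at *
    have h1 := occ_step p c.reverse q v r a hvr (by simpa using hr)
      (by simpa using ht.symm) (by simpa using hd.symm) ha.2
    have h2 := occ_step_lt p c.reverse q v r a hvr (by simpa using hr) ha.1
    simp only [List.reverse_reverse, List.length_reverse] at h1 h2
    exact ⟨h2, h1⟩
  · intro a _; exact Fm_invol hvr
  · intro a _; exact Fm_invol hvr

lemma occR_nil [DecidableEq A] (w : List A) : occR w [] = w.length + 1 := by
  simp [occR]

end LrttAux

open LrttAux in
theorem lrtt_pumped_reverse {A : Type*} [DecidableEq A] (k t : ℕ) (hk : 0 < k) (ht : 0 < t)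
    (u s α β : List A) (hu : u ≠ [])
    (w : List A) (hw : w = wpow u k ++ s ++ (wpow u k).reverse) :
    LRTT k t (α ++ w ++ β) (α ++ w.reverse ++ β) := by
  have hu1 : 1 ≤ u.length := List.length_pos_iff.mpr hu
  set a : List A := wpow u k with ha
  have hal : a.length = k * u.length := by
    simp [ha, wpow]
  have har : k ≤ a.length := by
    rw [hal]
    calc k = k * 1 := (mul_one k).symm
    _ ≤ k * u.length := Nat.mul_le_mul_left k hu1
  have hwr : w.reverse = a ++ s.reverse ++ a.reverse := by
    rw [hw]
    simp [List.reverse_append, List.append_assoc]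
  have hlw : w.length = a.length + s.length + a.length := by
    simp only [hw, List.length_append, List.length_reverse]
  have ht1 : w.take a.length = a := by
    rw [hw, List.append_assoc]
    exact List.take_left (l₁ := a)
  have ht2 : w.reverse.take a.length = a := by
    rw [hwr, List.append_assoc]
    exact List.take_left (l₁ := a)
  have htW : w.take a.length = w.reverse.take a.length := ht1.trans ht2.symm
  have hd1 : w.drop (w.length - a.length) = a.reverse := by
    have hidx : w.length - a.length = (a ++ s).length := by
      simp only [List.length_append]; omega
    rw [hidx, hw]
    exact List.drop_left (l₁ := a ++ s)
  have hd2 : w.reverse.drop (w.length - a.length) = a.reverse := by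
    have hidx : w.length - a.length = (a ++ s.reverse).length := by
      simp only [List.length_append, List.length_reverse]; omega
    rw [hidx, hwr]
    exact List.drop_left (l₁ := a ++ s.reverse)
  have hdW : w.drop (w.length - a.length) = w.reverse.drop (w.length - a.length) :=
    hd1.trans hd2.symm
  have hra : a.length ≤ w.length := by omega
  have hkW : k ≤ (α ++ w ++ β).length := by
    simp only [List.length_append]; omega
  have hkW' : k ≤ (α ++ w.reverse ++ β).length := by
    simp only [List.length_append, List.length_reverse]; omega
  refine Or.inr ⟨hkW, hkW', ?_, ?_⟩
  · intro v hv
    left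
    by_cases hv0 : v = []
    · subst hv0
      rw [occR_nil, occR_nil]
      simp only [List.length_append, List.length_reverse]
    · exact occR_middle_reverse α w β v a.length (hv.trans har) hra htW hdW
  · have htk_n : (α ++ w ++ β).take (α.length + a.length)
        = (α ++ w.reverse ++ β).take (α.length + a.length) := by
      rw [List.append_assoc, List.append_assoc, List.take_length_add_append, List.take_length_add_append,
        List.take_append_of_le_length hra,
        List.take_append_of_le_length (by simpa using hra), htW]
    have htake : (α ++ w ++ β).take (k - 1) = (α ++ w.reverse ++ β).take (k - 1) := by
      have h2 := congrArg (List.take (k - 1)) htk_n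
      simpa [List.take_take, Nat.min_eq_left (show k - 1 ≤ α.length + a.length by omega)]
        using h2
    have hdrp : (α ++ w ++ β).drop (α.length + (w.length - a.length))
        = (α ++ w.reverse ++ β).drop (α.length + (w.length - a.length)) := by
      rw [List.append_assoc, List.append_assoc, List.drop_length_add_append, List.drop_length_add_append,
        List.drop_append_of_le_length (by omega),
        List.drop_append_of_le_length (by simp only [List.length_reverse]; omega), hd1, hd2]
    have hlen' : (α ++ w.reverse ++ β).length = (α ++ w ++ β).length := by
      simp only [List.length_append, List.length_reverse]
    have hdrop : (α ++ w ++ β).drop ((α ++ w ++ β).length - (k - 1))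
        = (α ++ w.reverse ++ β).drop ((α ++ w.reverse ++ β).length - (k - 1)) := by
      rw [hlen']
      apply drop_eq_of_drop_eq hdrp
      simp only [List.length_append]
      omega
    rw [htake, hdrop]
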